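/- For every nonzero integer k, every solution of the ODE u' = −C_k u with C_k = [[0, ik],[ik, 1]] satisfies ‖u(t)‖₂² ≤ 3 e^{−t} ‖u(0)‖₂² for all t ≥ 0, and the constant 3 is uniform in k (since κ(P_k) = (2|k|+1)/(2|k|−1) ≤ 3). -/

import Mathlib

open Matrix Complex Finset

theorem stmt9 (k : ℤ) (hk : k ≠ 0) (u : ℝ → Fin 2 → ℂ)
    (hu : ∀ t : ℝ,
      HasDerivAt u (-((!![0, Complex.I * k; Complex.I * k, 1] :
        Matrix (Fin 2) (Fin 2) ℂ).mulVec (u t))) t) :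
    ∀ t : ℝ, 0 ≤ t →
      ∑ i, ‖u t i‖ ^ 2 ≤ 3 * Real.exp (-t) * ∑ i, ‖u 0 i‖ ^ 2 := by
  have hkC : (k : ℂ) ≠ 0 := Int.cast_ne_zero.mpr hk
  set x : ℝ → ℂ := fun t => u t 0 with hxdef
  set y : ℝ → ℂ := fun t => u t 1 with hydef
  have hx : ∀ t, HasDerivAt x (-(Complex.I * k * y t)) t := by
    intro t
    have := (hasDerivAt_pi.mp (hu t)) 0
    simpa [Matrix.mulVec, dotProduct, Fin.sum_univ_two] using this
  have hy : ∀ t, HasDerivAt y (-(Complex.I * k * x t + y t)) t := by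
    intro t
    have := (hasDerivAt_pi.mp (hu t)) 1
    simpa [Matrix.mulVec, dotProduct, Fin.sum_univ_two] using this
  set F : ℝ → ℂ := fun t =>
    x t * (starRingEnd ℂ) (x t) + y t * (starRingEnd ℂ) (y t) +
      (Complex.I / k) * (x t * (starRingEnd ℂ) (y t)) with hFdef
  have hF : ∀ t, HasDerivAt F (-(F t)) t := by
    intro t
    have hxc : HasDerivAt (fun s => (starRingEnd ℂ) (x s))
        ((starRingEnd ℂ) (-(Complex.I * k * y t))) t := (hx t).star
    have hyc : HasDerivAt (fun s => (starRingEnd ℂ) (y s))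
        ((starRingEnd ℂ) (-(Complex.I * k * x t + y t))) t := (hy t).star
    have h := (((hx t).mul hxc).add ((hy t).mul hyc)).add
      (((hx t).mul hyc).const_mul (Complex.I / k))
    refine h.congr_deriv (Eq.symm ?_)
    simp only [map_neg, _root_.map_mul, map_add, Complex.conj_I, map_intCast]
    have hkk : (k : ℂ) * ((k : ℂ))⁻¹ = 1 := mul_inv_cancel₀ hkC
    linear_combination (-(x t * (starRingEnd ℂ) (x t) - y t * (starRingEnd ℂ) (y t)) *
        (k : ℂ) * ((k : ℂ))⁻¹) * Complex.I_sq +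
      (x t * (starRingEnd ℂ) (x t) - y t * (starRingEnd ℂ) (y t)) * hkk
  have hconst : ∀ t : ℝ, F t * Complex.exp t = F 0 := by
    have hg : ∀ t : ℝ, HasDerivAt (fun s : ℝ => F s * Complex.exp s) 0 t := by
      intro t
      have he : HasDerivAt (fun s : ℝ => Complex.exp s) (Complex.exp t) t :=
        (Complex.hasDerivAt_exp (t : ℂ)).comp_ofReal
      have h := (hF t).mul he
      refine h.congr_deriv (Eq.symm ?_)
      ring
    intro t
    have h := is_const_of_deriv_eq_zero (fun s => (hg s).differentiableAt)
      (fun s => (hg s).deriv) t 0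
    simpa using h
  have hFt : ∀ t : ℝ, (F t).re = (F 0).re * Real.exp (-t) := by
    intro t
    have h1 : F t = F 0 * ((Real.exp (-t) : ℝ) : ℂ) := by
      have h0 := hconst t
      rw [Complex.ofReal_exp]
      push_cast
      rw [Complex.exp_neg]
      field_simp [Complex.exp_ne_zero]
      linear_combination h0
    rw [h1, Complex.mul_re, Complex.ofReal_re, Complex.ofReal_im]
    ring
  have hre : ∀ t : ℝ, (F t).re =
      ‖x t‖ ^ 2 + ‖y t‖ ^ 2 - (x t * (starRingEnd ℂ) (y t)).im / (k : ℝ) := by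
    intro t
    have hcast : ((k : ℤ) : ℂ) = (((k : ℝ) : ℝ) : ℂ) := by push_cast; ring
    simp only [hFdef, Complex.add_re, Complex.mul_conj, hcast, div_mul_eq_mul_div,
      Complex.div_ofReal_re]
    rw [Complex.normSq_eq_norm_sq, Complex.normSq_eq_norm_sq]
    simp [Complex.mul_re, Complex.I_re, Complex.I_im,
      ← Complex.ofReal_pow, Complex.ofReal_re]
    ring
  have hbound : ∀ t : ℝ, |(x t * (starRingEnd ℂ) (y t)).im / (k : ℝ)| ≤
      (‖x t‖ ^ 2 + ‖y t‖ ^ 2) / 2 := by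
    intro t
    have h1 : |(x t * (starRingEnd ℂ) (y t)).im| ≤ ‖x t‖ * ‖y t‖ := by
      calc |(x t * (starRingEnd ℂ) (y t)).im| ≤ ‖x t * (starRingEnd ℂ) (y t)‖ :=
            Complex.abs_im_le_norm _
        _ = ‖x t‖ * ‖y t‖ := by
            simp [norm_mul, Complex.norm_conj]
    have h2 : (1 : ℝ) ≤ |(k : ℝ)| := by
      have := Int.one_le_abs hk
      exact_mod_cast this
    have h3 : ‖x t‖ * ‖y t‖ ≤ (‖x t‖ ^ 2 + ‖y t‖ ^ 2) / 2 := by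
      nlinarith [sq_nonneg (‖x t‖ - ‖y t‖)]
    rw [abs_div]
    calc |(x t * (starRingEnd ℂ) (y t)).im| / |(k : ℝ)|
        ≤ |(x t * (starRingEnd ℂ) (y t)).im| := div_le_self (abs_nonneg _) h2
      _ ≤ ‖x t‖ * ‖y t‖ := h1
      _ ≤ (‖x t‖ ^ 2 + ‖y t‖ ^ 2) / 2 := h3
  have habs : ∀ t : ℝ, (∑ i, ‖u t i‖ ^ 2) = ‖x t‖ ^ 2 + ‖y t‖ ^ 2 := by
    intro t
    simp [Fin.sum_univ_two, hxdef, hydef]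
  intro t ht
  have hexp : (0 : ℝ) < Real.exp (-t) := Real.exp_pos _
  have hub0 : (F 0).re ≤ 3 / 2 * (‖x 0‖ ^ 2 + ‖y 0‖ ^ 2) := by
    rw [hre 0]
    linarith [(abs_le.mp (hbound 0)).1]
  have hlbt : ‖x t‖ ^ 2 + ‖y t‖ ^ 2 ≤ 2 * (F t).re := by
    rw [hre t]
    linarith [(abs_le.mp (hbound t)).2]
  rw [habs t, habs 0]
  calc ‖x t‖ ^ 2 + ‖y t‖ ^ 2 ≤ 2 * (F t).re := hlbt
    _ = 2 * (F 0).re * Real.exp (-t) := by rw [hFt t]; ring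
    _ ≤ 3 * Real.exp (-t) * (‖x 0‖ ^ 2 + ‖y 0‖ ^ 2) := by
        nlinarith [mul_le_mul_of_nonneg_right hub0 hexp.le]
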